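/- arXiv:1010.5106 — 7 statements merged into one kernel-verified Lean document; each statement's English description precedes it below -/
import Mathlib

section
/- For positive integers m, p with 0 < p < m, and k ≥ 2, set a = (m-p)/p. For λ > 0, let b(λ) = p*λ^2 + (m-p)/λ^2 and t(λ) = p*λ - (m-p)/λ. Then b(λ)^2 - m*b(λ) - (k-2)*t(λ)^2 = 0 if and only if (λ^2 - a) * (λ^6 - (k-1)λ^4 + (k-1)a*λ^2 - a) = 0. -/
/-- Factorization of the k-harmonic condition for the Clifford torus (Theorem 3.8 context) -/
theorem stmt_1 (m p : ℕ) (hp : 0 < p) (hpm : p < m) (k : ℕ) (hk : 2 ≤ k)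
    (l : ℝ) (hl : 0 < l)
    (a b t : ℝ)
    (ha : a = ((m : ℝ) - p) / p)
    (hb : b = (p : ℝ) * l ^ 2 + ((m : ℝ) - p) / l ^ 2)
    (ht : t = (p : ℝ) * l - ((m : ℝ) - p) / l) :
    b ^ 2 - (m : ℝ) * b - ((k : ℝ) - 2) * t ^ 2 = 0 ↔
      (l ^ 2 - a) * (l ^ 6 - ((k : ℝ) - 1) * l ^ 4 + ((k : ℝ) - 1) * a * l ^ 2 - a) = 0 := by
  have hl0 : l ≠ 0 := ne_of_gt hl
  have hp0 : (p : ℝ) ≠ 0 := by positivity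
  have key : (b ^ 2 - (m : ℝ) * b - ((k : ℝ) - 2) * t ^ 2) * l ^ 4 =
      (p : ℝ) ^ 2 * ((l ^ 2 - a) * (l ^ 6 - ((k : ℝ) - 1) * l ^ 4 + ((k : ℝ) - 1) * a * l ^ 2 - a)) := by
    subst ha hb ht
    field_simp
    ring
  constructor
  · intro h
    have := key.symm
    rw [h, zero_mul] at this
    rcases mul_eq_zero.mp this with h1 | h1
    · exact absurd h1 (by positivity)
    · exact h1
  · intro h
    have : (b ^ 2 - (m : ℝ) * b - ((k : ℝ) - 2) * t ^ 2) * l ^ 4 = 0 := by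
      rw [key, h, mul_zero]
    rcases mul_eq_zero.mp this with h1 | h1
    · exact h1
    · exact absurd h1 (by positivity)
end

section
/- Let n₁, n₂ be positive integers, n = n₁ + n₂, and r₁, r₂ > 0 with r₁² + r₂² = 1. Set B = (r₂²/r₁²)n₁ + (r₁²/r₂²)n₂ and T = (r₁/r₂)n₂ - (r₂/r₁)n₁. If n₁ = n₂ and k ∈ {2,3,4}, then B² - n·B - (k-2)·T² = 0 together with T ≠ 0 has no solution (r₁, r₂). -/
/-- Corollary 4.8, case 1 -/
theorem stmt_8 (n₁ n₂ : ℕ) (hn₁ : 0 < n₁) (hn₂ : 0 < n₂) (heq : n₁ = n₂)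
    (n : ℕ) (hn : n = n₁ + n₂) (k : ℕ) (hk : k = 2 ∨ k = 3 ∨ k = 4) :
    ¬ ∃ r₁ r₂ : ℝ, 0 < r₁ ∧ 0 < r₂ ∧ r₁ ^ 2 + r₂ ^ 2 = 1 ∧
      ((r₂ ^ 2 / r₁ ^ 2 * n₁ + r₁ ^ 2 / r₂ ^ 2 * n₂) ^ 2
        - (n : ℝ) * (r₂ ^ 2 / r₁ ^ 2 * n₁ + r₁ ^ 2 / r₂ ^ 2 * n₂)
        - ((k : ℝ) - 2) * (r₁ / r₂ * n₂ - r₂ / r₁ * n₁) ^ 2 = 0) ∧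
      (r₁ / r₂ * n₂ - r₂ / r₁ * n₁ ≠ 0) := by
  subst heq hn
  rintro ⟨r₁, r₂, h1, h2, h3, heqn, hT⟩
  have hr₁ : r₁ ≠ 0 := h1.ne'
  have hr₂ : r₂ ≠ 0 := h2.ne'
  have hm : (0:ℝ) < (n₁:ℝ) := by exact_mod_cast hn₁
  set u : ℝ := r₂ / r₁ with hu
  set v : ℝ := r₁ / r₂ with hv
  have huv : u * v = 1 := by rw [hu, hv]; field_simp
  have hvu : v - u ≠ 0 := by
    intro h
    apply hT
    have : v * n₁ - u * n₁ = (v - u) * n₁ := by ring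
    rw [show v * (n₁:ℝ) - u * n₁ = (v - u) * n₁ from by ring, h, zero_mul]
  have hs : (0:ℝ) < (v - u) ^ 2 := by positivity
  have e1 : r₂ ^ 2 / r₁ ^ 2 = u ^ 2 := by rw [hu]; rw [div_pow]
  have e2 : r₁ ^ 2 / r₂ ^ 2 = v ^ 2 := by rw [hv]; rw [div_pow]
  rw [e1, e2] at heqn
  push_cast at heqn
  have heqn' : ((n₁:ℝ))^2 * ((u^2 + v^2)^2 - 2*(u^2+v^2) - ((k:ℝ)-2)*(v-u)^2) = 0 := by
    nlinarith [heqn]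
  have hfac : (u^2 + v^2)^2 - 2*(u^2+v^2) - ((k:ℝ)-2)*(v-u)^2 = 0 := by
    rcases mul_eq_zero.mp heqn' with h | h
    · exact absurd h (by positivity)
    · exact h
  have hk4 : (k:ℝ) ≤ 4 := by
    rcases hk with h | h | h <;> subst h <;> norm_num
  nlinarith [hfac, huv, hs, sq_nonneg (v-u), mul_pos hs hs, hk4,
    mul_nonneg hs.le (sub_nonneg.mpr hk4)]
end

section
/- Let n₁ = n₂ = q be a positive integer, n = 2q, k ≥ 5 an integer, and r₁, r₂ > 0 with r₁² + r₂² = 1. Set B = (r₂²/r₁²)q + (r₁²/r₂²)q and T = (r₁/r₂)q - (r₂/r₁)q. Then B² - nB - (k-2)T² = 0 with T ≠ 0 holds if and only if {r₁², r₂²} = {(1 + √((k-4)/k))/2, (1 - √((k-4)/k))/2}. -/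
set_option maxHeartbeats 1000000


/-- Corollary 4.8, case 2 -/
theorem stmt_9 (q : ℕ) (hq : 0 < q) (n : ℕ) (hn : n = 2 * q)
    (k : ℕ) (hk : 5 ≤ k) (r₁ r₂ : ℝ) (hr₁ : 0 < r₁) (hr₂ : 0 < r₂)
    (hsum : r₁ ^ 2 + r₂ ^ 2 = 1)
    (B T : ℝ)
    (hB : B = r₂ ^ 2 / r₁ ^ 2 * q + r₁ ^ 2 / r₂ ^ 2 * q)
    (hT : T = r₁ / r₂ * q - r₂ / r₁ * q) :
    (B ^ 2 - (n : ℝ) * B - ((k : ℝ) - 2) * T ^ 2 = 0 ∧ T ≠ 0) ↔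
      ((r₁ ^ 2 = (1 + Real.sqrt (((k : ℝ) - 4) / k)) / 2 ∧
        r₂ ^ 2 = (1 - Real.sqrt (((k : ℝ) - 4) / k)) / 2) ∨
       (r₁ ^ 2 = (1 - Real.sqrt (((k : ℝ) - 4) / k)) / 2 ∧
        r₂ ^ 2 = (1 + Real.sqrt (((k : ℝ) - 4) / k)) / 2)) := by
  have h10 : r₁ ≠ 0 := ne_of_gt hr₁
  have h20 : r₂ ≠ 0 := ne_of_gt hr₂
  have hk5 : (5:ℝ) ≤ (k:ℝ) := by exact_mod_cast hk
  have hk0 : (0:ℝ) < (k:ℝ) := by linarith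
  have hq0 : (0:ℝ) < (q:ℝ) := by exact_mod_cast hq
  set s : ℝ := Real.sqrt (((k : ℝ) - 4) / k) with hs
  have hs2 : s ^ 2 = ((k:ℝ) - 4) / k := Real.sq_sqrt (div_nonneg (by linarith) hk0.le)
  have hs2' : (k:ℝ) * s ^ 2 = (k:ℝ) - 4 := by
    rw [hs2]; field_simp
  have hs0 : 0 < s := Real.sqrt_pos.mpr (div_pos (by linarith) hk0)
  have hn' : ((n:ℝ)) = 2 * (q:ℝ) := by rw [hn]; push_cast; ring
  have hT2 : T ^ 2 = (q:ℝ)^2 * (r₁^2/r₂^2 + r₂^2/r₁^2 - 2) := by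
    rw [hT]; field_simp; ring
  have hb1 : r₂ ^ 2 = 1 - r₁ ^ 2 := by linarith
  have hb0 : (1:ℝ) - r₁ ^ 2 ≠ 0 := by rw [← hb1]; positivity
  have hid : (B ^ 2 - (n : ℝ) * B - ((k : ℝ) - 2) * T ^ 2) * (r₁^2 * r₂^2)^2
      = (q:ℝ)^2 * ((1 - 4 * (r₁^2 * r₂^2)) * (1 - (k:ℝ) * (r₁^2 * r₂^2))) := by
    rw [hB, hT2, hn', hb1]
    field_simp
    ring
  have hTid : T * (r₁ * r₂) = (q:ℝ) * (r₁^2 - r₂^2) := by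
    rw [hT]; field_simp
  have hTne : T ≠ 0 ↔ r₁ ^ 2 ≠ r₂ ^ 2 := by
    constructor
    · intro hT0 hab
      apply hT0
      have hr : r₁ = r₂ := by
        rw [← Real.sqrt_sq hr₁.le, ← Real.sqrt_sq hr₂.le, hab]
      rw [hT, hr]; ring
    · intro hab hT0
      apply hab
      rw [hT0, zero_mul] at hTid
      have := hTid.symm
      have h' : r₁ ^ 2 - r₂ ^ 2 = 0 := by
        rcases mul_eq_zero.mp this with h | h
        · exact absurd h (ne_of_gt hq0)
        · exact h
      linarith
  constructor
  · rintro ⟨hE, hT0⟩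
    have hane : r₁ ^ 2 ≠ r₂ ^ 2 := hTne.mp hT0
    have hprod0 : (q:ℝ)^2 * ((1 - 4 * (r₁^2 * r₂^2)) * (1 - (k:ℝ) * (r₁^2 * r₂^2))) = 0 := by
      rw [← hid, hE]; ring
    have hprod : (1 - 4 * (r₁^2 * r₂^2)) * (1 - (k:ℝ) * (r₁^2 * r₂^2)) = 0 := by
      rcases mul_eq_zero.mp hprod0 with h | h
      · exact absurd h (by positivity)
      · exact h
    rcases mul_eq_zero.mp hprod with h4 | hk1
    · -- u = 1/4 forces r₁² = r₂², contradiction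
      exfalso
      have hz : (r₁^2 - r₂^2)^2 = 0 := by
        linear_combination (r₁^2 + r₂^2 + 1) * hsum + h4
      exact hane (by
        have := pow_eq_zero_iff (n := 2) (by norm_num) |>.mp hz
        linarith)
    · have h1 : (k:ℝ) * (r₁^2 - r₂^2)^2 = (k:ℝ) * s^2 := by
        linear_combination ((k:ℝ) * (r₁^2 + r₂^2 + 1)) * hsum + 4 * hk1 - hs2'
      have h1' : (r₁^2 - r₂^2)^2 = s^2 := mul_left_cancel₀ (ne_of_gt hk0) h1
      have h2 : (r₁^2 - r₂^2 - s) * (r₁^2 - r₂^2 + s) = 0 := by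
        linear_combination h1'
      rcases mul_eq_zero.mp h2 with h | h
      · exact Or.inl ⟨by linarith, by linarith⟩
      · exact Or.inr ⟨by linarith, by linarith⟩
  · rintro (⟨ha', hb'⟩ | ⟨ha', hb'⟩) <;>
    · have hk1 : 1 - (k:ℝ) * (r₁^2 * r₂^2) = 0 := by
        rw [ha', hb']; linear_combination ((1:ℝ)/4) * hs2'
      have hdiff : r₁ ^ 2 ≠ r₂ ^ 2 := by
        rw [ha', hb']; intro h
        have : s = 0 := by linarith
        exact absurd this (ne_of_gt hs0)
      refine ⟨?_, hTne.mpr hdiff⟩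
      have h5 : (B ^ 2 - (n : ℝ) * B - ((k : ℝ) - 2) * T ^ 2) * (r₁^2 * r₂^2)^2 = 0 := by
        rw [hid, hk1]; ring
      rcases mul_eq_zero.mp h5 with h | h
      · exact h
      · exact absurd h (by positivity)
end

section
/- Let k ≥ 2 and m ≥ 1 be integers. The sphere S^m(1/√k) immersed as a parallel hypersurface in S^{m+1} satisfies the k-harmonicity equation: with b = ‖B‖² = m(k-1) and t = ‖τ(φ)‖ = m√(k-1) (coming from the constant principal curvature √(k-1)), one has b² - m·b - (k-2)·t² = 0, and t ≠ 0 for k ≥ 2. -/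
/-- Theorem 3.7: S^m(1/√k) is a proper k-harmonic hypersphere -/
theorem stmt_12 (k m : ℕ) (hk : 2 ≤ k) (hm : 1 ≤ m)
    (b t : ℝ) (hb : b = (m : ℝ) * ((k : ℝ) - 1))
    (ht : t = (m : ℝ) * Real.sqrt ((k : ℝ) - 1)) :
    b ^ 2 - (m : ℝ) * b - ((k : ℝ) - 2) * t ^ 2 = 0 ∧ t ≠ 0 := by
  have hk1 : (1 : ℝ) ≤ (k : ℝ) := by exact_mod_cast hk.trans' (by norm_num)
  have hnn : (0 : ℝ) ≤ (k : ℝ) - 1 := by linarith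
  have hs : Real.sqrt ((k : ℝ) - 1) ^ 2 = (k : ℝ) - 1 := Real.sq_sqrt hnn
  constructor
  · subst hb ht; rw [mul_pow (↑m) (Real.sqrt ((k:ℝ)-1)), hs]; ring
  · subst ht
    have hm' : (0 : ℝ) < m := by exact_mod_cast hm
    have hpos : (0 : ℝ) < (k : ℝ) - 1 := by
      have : (2 : ℝ) ≤ (k : ℝ) := by exact_mod_cast hk
      linarith
    positivity
end

section
/- Let a > 1 be a rational (or real) number, and k = 3. Then the cubic equation x³ - 2x² + 2a·x - a = 0 (x = λ²) has exactly one positive real root when its discriminant condition from the paper holds for a = 2; in particular for a = 2 (i.e., n₂ = 2n₁ case translated, or m - p = 2p), the unique positive root is x = λ² where λ is given by Cardano's formula λ² = A^{1/3} + (k² - 3a(k-1) - 2k + 1)/(9A^{1/3}) + (k-1)/3 with the A given in Corollary 3.10. -/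
/-- Corollary 3.10, checked for a = 2, k = 3: Cardano's formula gives the unique positive root -/
theorem stmt_13 (a : ℝ) (ha : a = 2) (k : ℕ) (hk : k = 3)
    (A : ℝ)
    (hA : A = Real.sqrt (-a * (a * (k : ℝ) ^ 4 - 4 * (a ^ 2 + a + 1) * (k : ℝ) ^ 3
          + 12 * (a + 1) ^ 2 * (k : ℝ) ^ 2 - 4 * (3 * a ^ 2 + 10 * a + 3) * (k : ℝ)
          + 4 * (a - 1) ^ 2)) / (2 * 3 ^ ((3 : ℝ) / 2))
        - (-2 * (k : ℝ) ^ 3 + 9 * a * ((k : ℝ) ^ 2 - 2 * (k : ℝ) - 2)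
          + 2 * (3 * (k : ℝ) ^ 2 - 3 * (k : ℝ) + 1)) / 54)
    (x : ℝ)
    (hx : x = A ^ ((1 : ℝ) / 3)
        + ((k : ℝ) ^ 2 - 3 * a * ((k : ℝ) - 1) - 2 * (k : ℝ) + 1) / (9 * A ^ ((1 : ℝ) / 3))
        + ((k : ℝ) - 1) / 3) :
    0 < x ∧ x ^ 3 - 2 * x ^ 2 + 2 * a * x - a = 0 ∧
      ∀ y : ℝ, 0 < y → y ^ 3 - 2 * y ^ 2 + 2 * a * y - a = 0 → y = x := by
  subst ha hk
  set s := Real.sqrt 57 with hs_def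
  have hs2 : s ^ 2 = 57 := Real.sq_sqrt (by norm_num)
  have hs_lb : (7 : ℝ) < s := by
    nlinarith [Real.sqrt_nonneg 57, hs2]
  push_cast at hA hx
  norm_num at hA hx
  -- simplify A
  have hA' : A = s / 9 - 1 / 27 := by
    have h32 : (3:ℝ) ^ ((3:ℝ)/2) = 3 * Real.sqrt 3 := by
      rw [show (3:ℝ)/2 = 1 + (1:ℝ)/2 by ring, Real.rpow_add (by norm_num), Real.rpow_one,
        ← Real.sqrt_eq_rpow]
    rw [h32] at hA
    have e1 : Real.sqrt 76 = 2 * Real.sqrt 19 := by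
      rw [show (76:ℝ) = 2^2 * 19 by norm_num, Real.sqrt_mul (by positivity),
        Real.sqrt_sq (by norm_num)]
    have e3 : s = Real.sqrt 19 * Real.sqrt 3 := by
      rw [hs_def, show (57:ℝ) = 19 * 3 by norm_num, Real.sqrt_mul (by norm_num)]
    have h3 : Real.sqrt 3 * Real.sqrt 3 = 3 := Real.mul_self_sqrt (by norm_num)
    have h3pos : (0:ℝ) < Real.sqrt 3 := Real.sqrt_pos.mpr (by norm_num)
    rw [hA, e1, e3]
    field_simp
    linear_combination (-81 * Real.sqrt 19) * h3
  have hApos : 0 < A := by rw [hA']; nlinarith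
  set u := A ^ ((1:ℝ)/3) with hu_def
  have hupos : 0 < u := Real.rpow_pos_of_pos hApos _
  have hu3 : u ^ 3 = A := by
    rw [hu_def, ← Real.rpow_natCast (A ^ ((1:ℝ)/3)) 3, ← Real.rpow_mul hApos.le]
    norm_num
  have hu3' : u ^ 3 = s / 9 - 1 / 27 := by rw [hu3, hA']
  have hx0 : x ^ 3 - 2 * x ^ 2 + 4 * x - 2 = 0 := by
    rw [hx]
    field_simp
    linear_combination (387420489*u^6 + 43046721*s*u^3 + 14348907*u^3 + 4782969*s^2 - 272629233 + 9*(27-531441*u^3)*(81*u^3+9*s+3)) * hu3' + (531441*s - 177147 + 9*(27-531441*u^3)) * hs2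
  refine ⟨by nlinarith [sq_nonneg x, sq_nonneg (x - 1), sq_nonneg (x + 1)], by linarith [hx0], ?_⟩
  intro y hy hfy
  have hfact : (y - x) * (y ^ 2 + x * y + x ^ 2 - 2 * y - 2 * x + 4) = 0 := by
    linear_combination hfy - hx0
  have hquad : 0 < y ^ 2 + x * y + x ^ 2 - 2 * y - 2 * x + 4 := by
    nlinarith [sq_nonneg (x + y - 2), sq_nonneg (x - y), sq_nonneg x, sq_nonneg y]
  have := mul_eq_zero.mp hfact
  rcases this with h | h
  · linarith
  · linarith
end

section
/- Let c ≥ 2 be an integer, n₁ ≥ 1, n₂ = c·n₁, n = n₁ + n₂, C = c² + 4√c(c+1) + 6c + 1, and r₁, r₂ as in Example 4.9(ii). Set B = (r₂²/r₁²)n₁ + (r₁²/r₂²)n₂ and T = (r₁/r₂)n₂ - (r₂/r₁)n₁. Then B² - nB - 2T² = 0 and T ≠ 0. -/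
set_option maxHeartbeats 1000000
/-- Example 4.9 (ii): the explicit radii give a proper 4-harmonic submersion -/
theorem stmt_16 (c : ℕ) (hc : 2 ≤ c) (n₁ : ℕ) (hn₁ : 1 ≤ n₁)
    (n₂ n : ℕ) (hn₂ : n₂ = c * n₁) (hn : n = n₁ + n₂)
    (C : ℝ) (hC : C = (c : ℝ) ^ 2 + 4 * Real.sqrt c * ((c : ℝ) + 1) + 6 * c + 1)
    (r₁ r₂ : ℝ) (hr₁ : 0 < r₁) (hr₂ : 0 < r₂)
    (h1 : r₁ ^ 2 = (((c : ℝ) - 1) ^ ((5 : ℝ) / 3) + ((c : ℝ) + 3) * C ^ ((1 : ℝ) / 3)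
        + ((c : ℝ) - 1) ^ ((1 : ℝ) / 3) * C ^ ((2 : ℝ) / 3))
        / (4 * C ^ ((1 : ℝ) / 3) * ((c : ℝ) + 1)))
    (h2 : r₂ ^ 2 = (-(((c : ℝ) - 1) ^ ((5 : ℝ) / 3)) + (3 * (c : ℝ) + 1) * C ^ ((1 : ℝ) / 3)
        - ((c : ℝ) - 1) ^ ((1 : ℝ) / 3) * C ^ ((2 : ℝ) / 3))
        / (4 * C ^ ((1 : ℝ) / 3) * ((c : ℝ) + 1)))
    (B T : ℝ)
    (hB : B = r₂ ^ 2 / r₁ ^ 2 * n₁ + r₁ ^ 2 / r₂ ^ 2 * n₂)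
    (hT : T = r₁ / r₂ * n₂ - r₂ / r₁ * n₁) :
    B ^ 2 - (n : ℝ) * B - 2 * T ^ 2 = 0 ∧ T ≠ 0 := by
  have hc1 : (1:ℝ) < (c:ℝ) := by exact_mod_cast Nat.lt_of_lt_of_le one_lt_two hc
  have hcR : (2:ℝ) ≤ (c:ℝ) := by exact_mod_cast hc
  have hn₁R : (1:ℝ) ≤ (n₁:ℝ) := by exact_mod_cast hn₁
  have hn₂R : ((n₂:ℕ):ℝ) = (c:ℝ) * (n₁:ℝ) := by exact_mod_cast hn₂
  have hnR : ((n:ℕ):ℝ) = (n₁:ℝ) + (n₂:ℝ) := by exact_mod_cast hn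
  set q := Real.sqrt (c:ℝ) with hqdef
  have hq0 : 0 ≤ q := Real.sqrt_nonneg _
  have hq2 : q ^ 2 = (c:ℝ) := Real.sq_sqrt (by positivity)
  have hq1 : 1 < q := by
    rw [hqdef, show (1:ℝ) = Real.sqrt 1 by simp]
    exact Real.sqrt_lt_sqrt (by norm_num) hc1
  set v := (q+1) ^ ((1:ℝ)/3) with hvdef
  set w := (q-1) ^ ((1:ℝ)/3) with hwdef
  have hp1 : (0:ℝ) < q + 1 := by linarith only [hq1]
  have hp2 : (0:ℝ) < q - 1 := by linarith only [hq1]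
  have hv3 : v ^ 3 = q + 1 := by
    rw [hvdef, ← Real.rpow_natCast ((q+1) ^ ((1:ℝ)/3)) 3, ← Real.rpow_mul hp1.le]
    norm_num
  have hw3 : w ^ 3 = q - 1 := by
    rw [hwdef, ← Real.rpow_natCast ((q-1) ^ ((1:ℝ)/3)) 3, ← Real.rpow_mul hp2.le]
    norm_num
  have hv0 : 0 < v := Real.rpow_pos_of_pos hp1 _
  have hw0 : 0 < w := Real.rpow_pos_of_pos hp2 _
  have hwv : w < v := Real.rpow_lt_rpow hp2.le (by linarith only []) (by norm_num)
  have hC4 : C = (q+1) ^ 4 := by linear_combination hC - ((c:ℝ) + q^2 + 4*q + 6) * hq2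
  have hs1 : C ^ ((1:ℝ)/3) = v ^ 4 := by
    rw [hC4, hvdef, ← Real.rpow_natCast (q+1) 4, ← Real.rpow_mul hp1.le,
      ← Real.rpow_natCast ((q+1) ^ ((1:ℝ)/3)) 4, ← Real.rpow_mul hp1.le]
    norm_num
  have hs2 : C ^ ((2:ℝ)/3) = v ^ 8 := by
    rw [hC4, hvdef, ← Real.rpow_natCast (q+1) 4, ← Real.rpow_mul hp1.le,
      ← Real.rpow_natCast ((q+1) ^ ((1:ℝ)/3)) 8, ← Real.rpow_mul hp1.le]
    norm_num
  have hcm : (c:ℝ) - 1 = (q+1) * (q-1) := by linear_combination -hq2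
  have hu1 : ((c:ℝ) - 1) ^ ((1:ℝ)/3) = v * w := by
    rw [hcm, Real.mul_rpow hp1.le hp2.le]
  have hu5 : ((c:ℝ) - 1) ^ ((5:ℝ)/3) = v ^ 5 * w ^ 5 := by
    have h0 : (0:ℝ) ≤ (c:ℝ) - 1 := by linarith only [hc1]
    rw [show ((5:ℝ)/3) = (1:ℝ)/3 * (5:ℕ) by norm_num, Real.rpow_mul h0,
      Real.rpow_natCast, hu1, mul_pow]
  rw [hu5, hu1, hs1, hs2] at h1 h2
  set t : ℝ := v * w ^ 2 - v ^ 2 * w with htdef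
  have ht3 : t ^ 3 + 3 * ((c:ℝ) - 1) * t + 2 * ((c:ℝ) - 1) = 0 := by
    linear_combination (-w^3 - w^3*q + w^6 - 3*v*w^5 + 3*v^2*w^4 - v^3*w^3) * hv3
      + (-2 - 2*q + w^3 + w^3*q - 3*v*w^2 - 3*v*w^2*q + 3*v^2*w + 3*v^2*w*q) * hw3
      + (-2 - 3*v*w^2 + 3*v^2*w) * hq2
  have hnum : (-(v ^ 5 * w ^ 5) + (3 * (c:ℝ) + 1) * v ^ 4 - v * w * v ^ 8)
      = (1 + t) * (v ^ 5 * w ^ 5 + ((c:ℝ) + 3) * v ^ 4 + v * w * v ^ 8) := by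
    linear_combination (w + w*(c:ℝ) - w*q + w*q*(c:ℝ) - 2*w*q^2 - w^7 - w^7*q - 2*v + 2*v*(c:ℝ)
        - v*w^3 - 2*v*w^3*q - v*w^3*q^2 + v*w^6 + v*w^6*q - 2*v^2*w^2 - v^2*w^2*(c:ℝ)
        + 2*v^2*w^2*q + v^2*w^2*q^2 - 2*v^2*w^5 + v^3*w + v^3*w*(c:ℝ) - 2*v^3*w*q - v^3*w^7
        - v^4*w^3 - v^4*w^3*q + v^4*w^6 + v^5*w^2 + v^5*w^2*q - 2*v^6*w - v^7*w^3
        + v^8*w^2) * hv3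
      + (w + w*q - w*q^2 - w*q^3 - w^4 - 2*w^4*q - w^4*q^2 - 2*v - 4*v*q - 2*v*q^2 + v*w^3
        + 2*v*w^3*q + v*w^3*q^2 - 2*v^2*w^2 - 2*v^2*w^2*q) * hw3
      + (-w - 2*w*q - w*q^2 - 2*v - 2*v*q + v^2*w^2 + v^2*w^2*q) * hq2
  have hxy : r₂ ^ 2 = (1 + t) * r₁ ^ 2 := by
    rw [h1, h2, hnum, mul_div_assoc]
  have hx0 : (0:ℝ) < r₁ ^ 2 := by positivity
  have hy0 : (0:ℝ) < r₂ ^ 2 := by positivity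
  have ha0 : (0:ℝ) < 1 + t := by
    have h' : 1 + t = r₂ ^ 2 / r₁ ^ 2 := by
      rw [hxy]; field_simp
    rw [h']; positivity
  have htneg : t < 0 := by
    have h' : t = v * w * (w - v) := by ring
    rw [h']
    exact mul_neg_of_pos_of_neg (mul_pos hv0 hw0) (by linarith only [hwv])
  have hane : (1:ℝ) + t ≠ 0 := ne_of_gt ha0
  have hr₁ne : r₁ ≠ 0 := ne_of_gt hr₁
  have hr₂ne : r₂ ≠ 0 := ne_of_gt hr₂
  have hBval : B = ((1 + t) + (c:ℝ)/(1 + t)) * (n₁:ℝ) := by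
    rw [hB, hxy, hn₂R]
    field_simp
  have hT2val : T ^ 2 = ((1 + t) + (c:ℝ)^2/(1 + t) - 2*(c:ℝ)) * (n₁:ℝ)^2 := by
    rw [hT, hn₂R]
    field_simp
    linear_combination ((1 + t) * r₂^2 - (c:ℝ)^2 * r₁^2) * hxy
  have key : ((1 + t) + (c:ℝ)/(1 + t))^2 - ((c:ℝ) + 1)*((1 + t) + (c:ℝ)/(1 + t))
      - 2*((1 + t) + (c:ℝ)^2/(1 + t) - 2*(c:ℝ)) = 0 := by
    field_simp
    linear_combination (1 + t - (c:ℝ)) * ht3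
  constructor
  · rw [hBval, hT2val, hnR, hn₂R]
    linear_combination (n₁:ℝ)^2 * key
  · have hct : (0:ℝ) < (c:ℝ) - 1 - t := by linarith only [hcR, htneg]
    have hn₁pos : (0:ℝ) < (n₁:ℝ) := by linarith only [hn₁R]
    have h2' : r₂ ^ 2 * (n₁:ℝ) < r₁ ^ 2 * (n₂:ℝ) := by
      rw [hxy, hn₂R]
      have hh := mul_pos (mul_pos hct hx0) hn₁pos
      linarith only [hh]
    have hTpos : 0 < T := by
      rw [hT, sub_pos, div_mul_eq_mul_div, div_mul_eq_mul_div, div_lt_div_iff₀ hr₁ hr₂]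
      linarith only [h2']
    exact ne_of_gt hTpos
end

section
/- For every integer k ≥ 2, the point a = 1/√k, b = √((k-1)/k) lies on the unit circle a² + b² = 1, satisfies a ∈ (0,1), and the associated c with c² = a² + a⁴/b² equals 1/√(k-1); moreover n²/c² · (1/c)·(1-(k-1)c²) = 0 while n/c ≠ 0, showing the composed map φ: M → S^{n+1} is proper k-harmonic but not harmonic. -/
/-- Theorem 4.4, computational content -/
theorem stmt_19 (k : ℕ) (hk : 2 ≤ k) (n : ℕ) (hn : 0 < n)
    (a b c : ℝ) (ha : a = 1 / Real.sqrt k)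
    (hb : b = Real.sqrt (((k : ℝ) - 1) / k))
    (hcpos : 0 < c) (hc : c ^ 2 = a ^ 2 + a ^ 4 / b ^ 2) :
    a ^ 2 + b ^ 2 = 1 ∧ 0 < a ∧ a < 1 ∧ c = 1 / Real.sqrt ((k : ℝ) - 1) ∧
      (n : ℝ) ^ 2 / c ^ 2 * ((1 / c) * (1 - ((k : ℝ) - 1) * c ^ 2)) = 0 ∧
      (n : ℝ) / c ≠ 0 := by
  have hk2 : (2 : ℝ) ≤ (k : ℝ) := by exact_mod_cast hk
  have hkpos : (0 : ℝ) < k := by linarith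
  have hk1 : (0 : ℝ) < (k : ℝ) - 1 := by linarith
  have hsk : Real.sqrt k > 0 := Real.sqrt_pos.mpr hkpos
  have ha2 : a ^ 2 = 1 / k := by
    rw [ha, div_pow, one_pow, Real.sq_sqrt hkpos.le]
  have hb2 : b ^ 2 = ((k : ℝ) - 1) / k := by
    rw [hb, Real.sq_sqrt (by positivity)]
  have habs : a ^ 2 + b ^ 2 = 1 := by
    rw [ha2, hb2]; field_simp; ring
  have hapos : 0 < a := by rw [ha]; positivity
  have hak : a ^ 2 * k = 1 := by rw [ha2]; field_simp
  have ha1 : a < 1 := by nlinarith [sq_nonneg (a - 1)]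
  have ha4 : a ^ 4 = 1 / (k : ℝ) ^ 2 := by
    have : a ^ 4 = (a ^ 2) ^ 2 := by ring
    rw [this, ha2]; field_simp
  have hc2 : c ^ 2 = 1 / ((k : ℝ) - 1) := by
    rw [hc, ha2, hb2, ha4]
    field_simp
    ring
  have hceq : c = 1 / Real.sqrt ((k : ℝ) - 1) := by
    have : c = Real.sqrt (1 / ((k : ℝ) - 1)) := by
      rw [← hc2, Real.sqrt_sq hcpos.le]
    rw [this, one_div, Real.sqrt_inv, one_div]
  have hzero : (1 : ℝ) - ((k : ℝ) - 1) * c ^ 2 = 0 := by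
    rw [hc2]; field_simp; ring
  refine ⟨habs, hapos, ha1, hceq, by rw [hzero]; ring, ?_⟩
  have hnpos : (0 : ℝ) < n := by exact_mod_cast hn
  positivity
end
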